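/- arXiv:2507.15986 — 5 statements merged into one kernel-verified Lean document; each statement's English description precedes it below -/
import Mathlib

section
/- For any finite simple graph G and any edge e of G, the chromatic symmetric function satisfies the deletion-near-contraction relation: X_G = X_{G \setminus e} - X_{(G \odot e) \setminus \ell_e} + X_{G \odot e}. -/
open SimpleGraph

/-- The chromatic symmetric function of a finite simple graph, as a formal power
series in countably many variables over `ℤ`: the coefficient of a monomial `m`
is the number of proper colorings `f : V → ℕ` whose color-class sizes are
given by `m`. -/
noncomputable def csf {V : Type} [Fintype V] (G : SimpleGraph V) : MvPowerSeries ℕ ℤ :=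
  fun m => (Nat.card {f : V → ℕ // (∀ ⦃v w : V⦄, G.Adj v w → f v ≠ f w) ∧
    ∀ c : ℕ, {v : V | f v = c}.ncard = m c} : ℤ)

/-- Degree of a vertex. -/
noncomputable def deg {V : Type} [Fintype V] (G : SimpleGraph V) (v : V) : ℕ :=
  (G.neighborSet v).ncard

/-- The star graph on `k` vertices with center `0`. -/
def starGraph (k : ℕ) : SimpleGraph (Fin k) :=
  SimpleGraph.fromRel (fun x _ => x.val = 0)

/-- `stMultiset μ = ∏ k in μ, X_{St_k}`, the star-basis element indexed by the
multiset of parts `μ`. -/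
noncomputable def stMultiset (μ : Multiset ℕ) : MvPowerSeries ℕ ℤ :=
  (μ.map (fun k => csf (_root_.starGraph k))).prod

/-- The internal edges: edges both of whose endpoints have degree at least 2. -/
def internalEdges {V : Type} [Fintype V] (G : SimpleGraph V) : Set (Sym2 V) :=
  {e | e ∈ G.edgeSet ∧ ∀ v ∈ e, 2 ≤ deg G v}

open scoped Classical in
/-- The multiset of orders of the connected components of a graph. -/
noncomputable def componentOrders {V : Type} [Fintype V] (G : SimpleGraph V) : Multiset ℕ :=
  (Finset.univ.image G.connectedComponentMk).val.map (fun c => (c.supp).ncard)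

/-- The leaf component partition: orders of components after deleting internal edges. -/
noncomputable def lambdaLC {V : Type} [Fintype V] (G : SimpleGraph V) : Multiset ℕ :=
  componentOrders (G.deleteEdges (internalEdges G))

/-- Leaf contraction `G ⊙ e` for `e = uv`: contract `e` (merging `v` into `u`)
and attach a new pendant leaf (reusing the vertex `v`) to the merged vertex. -/
def leafContract {V : Type} (G : SimpleGraph V) (u v : V) : SimpleGraph V :=
  SimpleGraph.fromRel (fun x y => (x = v ∧ y = u) ∨
    (x ≠ v ∧ y ≠ v ∧ (G.Adj x y ∨ (x = u ∧ G.Adj v y))))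

/-- Dot contraction `(G ⊙ e) \ ℓ_e`: contract `e = uv` and add an isolated
vertex (reusing the vertex `v`). -/
def dotContract {V : Type} (G : SimpleGraph V) (u v : V) : SimpleGraph V :=
  SimpleGraph.fromRel (fun x y => x ≠ v ∧ y ≠ v ∧ (G.Adj x y ∨ (x = u ∧ G.Adj v y)))

/-- The deletion-near-contraction relation:
`X_G = X_{G∖e} - X_{(G⊙e)∖ℓₑ} + X_{G⊙e}`. -/
theorem deletion_near_contraction {V : Type} [Fintype V] (G : SimpleGraph V)
    (u v : V) (he : G.Adj u v) :
    csf G = csf (G.deleteEdges {s(u, v)}) - csf (dotContract G u v)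
      + csf (leafContract G u v) := by
  classical
  have hne : u ≠ v := he.ne
  apply MvPowerSeries.ext
  intro m
  have hcoeff : ∀ φ : MvPowerSeries ℕ ℤ, MvPowerSeries.coeff m φ = φ m := fun _ => rfl
  rw [map_add, map_sub, hcoeff, hcoeff, hcoeff, hcoeff]
  -- abbreviations
  set Cc : (V → ℕ) → Prop := fun f => ∀ c : ℕ, {x : V | f x = c}.ncard = m c with hCc
  have hcard : ∀ (H : SimpleGraph V), csf H m =
      (({f : V → ℕ | (∀ ⦃x y : V⦄, H.Adj x y → f x ≠ f y) ∧ Cc f}.ncard : ℕ) : ℤ) := by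
    intro H
    show ((Nat.card _ : ℤ)) = _
    rw [← Nat.card_coe_set_eq]
    rfl
  rw [hcard, hcard, hcard, hcard]
  set A := {f : V → ℕ | (∀ ⦃x y : V⦄, (G.deleteEdges {s(u, v)}).Adj x y → f x ≠ f y) ∧ Cc f} with hA
  set B := {f : V → ℕ | (∀ ⦃x y : V⦄, G.Adj x y → f x ≠ f y) ∧ Cc f} with hB
  set D := {f : V → ℕ | (∀ ⦃x y : V⦄, (dotContract G u v).Adj x y → f x ≠ f y) ∧ Cc f} with hD
  set L := {f : V → ℕ | (∀ ⦃x y : V⦄, (leafContract G u v).Adj x y → f x ≠ f y) ∧ Cc f} with hL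
  set E : Set (V → ℕ) := {f | f u = f v} with hE
  -- finiteness
  have hSfin : {f : V → ℕ | Cc f}.Finite := by
    apply Set.Finite.subset (Set.Finite.pi (fun _ : V => (m.support : Set ℕ).toFinite))
    intro f hf
    rw [Set.mem_pi]
    intro x _
    have h1 := hf (f x)
    simp only [Finset.coe_sort_coe, Finset.mem_coe, Finsupp.mem_support_iff]
    rw [← h1]
    exact ((Set.ncard_pos (Set.toFinite {y : V | f y = f x})).mpr ⟨x, rfl⟩).ne'
  have hAfin : A.Finite := hSfin.subset fun f hf => hf.2
  have hDfin : D.Finite := hSfin.subset fun f hf => hf.2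
  -- key set identities
  have key1 : A \ E = B := by
    ext f
    constructor
    · rintro ⟨⟨hP, hCf⟩, hfE⟩
      refine ⟨fun x y hxy => ?_, hCf⟩
      by_cases hs : s(x, y) = s(u, v)
      · rw [Sym2.eq_iff] at hs
        rcases hs with ⟨hx, hy⟩ | ⟨hx, hy⟩
        · rw [hx, hy]; exact hfE
        · rw [hx, hy]; exact fun h => hfE h.symm
      · exact hP (SimpleGraph.deleteEdges_adj.mpr ⟨hxy, by simpa using hs⟩)
    · rintro ⟨hP, hCf⟩
      exact ⟨⟨fun x y hxy => hP (SimpleGraph.deleteEdges_adj.mp hxy).1, hCf⟩, hP he⟩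
  have key2 : A ∩ E = D ∩ E := by
    ext f
    simp only [Set.mem_inter_iff, hA, hD, hE, Set.mem_setOf_eq]
    constructor
    · rintro ⟨⟨hP, hCf⟩, hfE⟩
      refine ⟨⟨fun x y hxy => ?_, hCf⟩, hfE⟩
      rw [dotContract, SimpleGraph.fromRel_adj] at hxy
      obtain ⟨hxy_ne, hr⟩ := hxy
      have key : ∀ a b : V, a ≠ b → a ≠ v → b ≠ v → (G.Adj a b ∨ (a = u ∧ G.Adj v b)) →
          f a ≠ f b := by
        rintro a b hab hav hbv (hG | ⟨hau, hGvb⟩)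
        · apply hP (SimpleGraph.deleteEdges_adj.mpr ⟨hG, ?_⟩)
          simp only [Set.mem_singleton_iff, Sym2.eq_iff]
          rintro (⟨_, h⟩ | ⟨h, _⟩) <;> [exact hbv h; exact hav h]
        · have hbu : b ≠ u := fun h => hab (hau.trans h.symm)
          have hvb : f v ≠ f b := by
            apply hP (SimpleGraph.deleteEdges_adj.mpr ⟨hGvb, ?_⟩)
            simp only [Set.mem_singleton_iff, Sym2.eq_iff]
            rintro (⟨h, _⟩ | ⟨_, h⟩) <;> [exact hne h.symm; exact hbu h]
          rw [hau, hfE]; exact hvb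
      rcases hr with ⟨hxv, hyv, h⟩ | ⟨hyv, hxv, h⟩
      · exact key x y hxy_ne hxv hyv h
      · exact fun hh => key y x hxy_ne.symm hyv hxv h hh.symm
    · rintro ⟨⟨hP, hCf⟩, hfE⟩
      refine ⟨⟨fun x y hxy => ?_, hCf⟩, hfE⟩
      rw [SimpleGraph.deleteEdges_adj] at hxy
      obtain ⟨hG, hmem⟩ := hxy
      simp only [Set.mem_singleton_iff, Sym2.eq_iff] at hmem
      push_neg at hmem
      by_cases hxv : x = v
      · have hyv : y ≠ v := fun h => hG.ne (hxv.trans h.symm)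
        have hyu : y ≠ u := hmem.2 hxv
        have hadj : (dotContract G u v).Adj u y := by
          rw [dotContract, SimpleGraph.fromRel_adj]
          exact ⟨fun h => hyu h.symm, Or.inl ⟨hne, hyv, Or.inr ⟨rfl, hxv ▸ hG⟩⟩⟩
        rw [hxv, ← hfE]
        exact hP hadj
      · by_cases hyv : y = v
        · have hxu : x ≠ u := fun h => hmem.1 h hyv
          have hadj : (dotContract G u v).Adj u x := by
            rw [dotContract, SimpleGraph.fromRel_adj]
            exact ⟨fun h => hxu h.symm, Or.inl ⟨hne, hxv, Or.inr ⟨rfl, hyv ▸ hG.symm⟩⟩⟩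
          intro h
          exact hP hadj (by rw [hfE, ← hyv, ← h])
        · refine hP ?_
          rw [dotContract, SimpleGraph.fromRel_adj]
          exact ⟨hG.ne, Or.inl ⟨hxv, hyv, Or.inl hG⟩⟩
  have key3 : D \ E = L := by
    ext f
    simp only [Set.mem_diff, hD, hL, hE, Set.mem_setOf_eq]
    constructor
    · rintro ⟨⟨hP, hCf⟩, hfE⟩
      refine ⟨fun x y hxy => ?_, hCf⟩
      rw [leafContract, SimpleGraph.fromRel_adj] at hxy
      obtain ⟨hxy_ne, hr⟩ := hxy
      have key : ∀ a b : V, a ≠ b →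
          ((a = v ∧ b = u) ∨ (a ≠ v ∧ b ≠ v ∧ (G.Adj a b ∨ (a = u ∧ G.Adj v b)))) →
          f a ≠ f b := by
        rintro a b hab (⟨hav, hbu⟩ | hrab)
        · rw [hav, hbu]; exact fun h => hfE h.symm
        · apply hP; rw [dotContract, SimpleGraph.fromRel_adj]; exact ⟨hab, Or.inl hrab⟩
      rcases hr with h | h
      · exact key x y hxy_ne h
      · exact fun hh => key y x hxy_ne.symm h hh.symm
    · rintro ⟨hP, hCf⟩
      refine ⟨⟨fun x y hxy => ?_, hCf⟩, ?_⟩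
      · apply hP
        rw [dotContract, SimpleGraph.fromRel_adj] at hxy
        rw [leafContract, SimpleGraph.fromRel_adj]
        exact ⟨hxy.1, hxy.2.imp Or.inr Or.inr⟩
      · have hadj : (leafContract G u v).Adj v u := by
          rw [leafContract, SimpleGraph.fromRel_adj]
          exact ⟨hne.symm, Or.inl (Or.inl ⟨rfl, rfl⟩)⟩
        exact fun h => hP hadj h.symm
  have h1 := Set.ncard_inter_add_ncard_diff_eq_ncard A E hAfin
  have h2 := Set.ncard_inter_add_ncard_diff_eq_ncard D E hDfin
  rw [key1, key2] at h1
  rw [key3] at h2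
  omega
end

section
/- If e is a leaf edge of a simple graph G (an edge incident to a vertex of degree 1), then X_G = X_{G \odot e} and X_{G \setminus e} = X_{(G \odot e) \setminus \ell_e}. -/
open SimpleGraph

/-- For a leaf edge `e = uv` (with `v` a leaf), `X_G = X_{G⊙e}` and
`X_{G∖e} = X_{(G⊙e)∖ℓₑ}`. -/
theorem leaf_edge_contraction {V : Type} [Fintype V] (G : SimpleGraph V)
    (u v : V) (he : G.Adj u v) (hv : deg G v = 1) :
    csf G = csf (leafContract G u v) ∧
    csf (G.deleteEdges {s(u, v)}) = csf (dotContract G u v) := by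
  have hvy : ∀ y, G.Adj v y ↔ y = u := by
    have h1 : (G.neighborSet v).ncard = 1 := hv
    obtain ⟨a, ha⟩ := Set.ncard_eq_one.mp h1
    have hu : u ∈ G.neighborSet v := he.symm
    rw [ha] at hu
    intro y
    constructor
    · intro hy
      have : y ∈ G.neighborSet v := hy
      rw [ha] at this
      simp_all
    · rintro rfl; exact he.symm
  constructor
  · refine congrArg csf ?_
    ext x y
    show G.Adj x y ↔ _
    simp only [leafContract, SimpleGraph.fromRel_adj]
    constructor
    · intro h
      constructor
      · exact h.ne
      by_cases hx : x = v
      · subst hx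
        exact Or.inl (Or.inl ⟨rfl, (hvy y).mp h⟩)
      · by_cases hy2 : y = v
        · subst hy2
          exact Or.inr (Or.inl ⟨rfl, (hvy x).mp h.symm⟩)
        · exact Or.inl (Or.inr ⟨hx, hy2, Or.inl h⟩)
    · rintro ⟨hne, h | h⟩
      · rcases h with ⟨rfl, rfl⟩ | ⟨hx, hy2, h | ⟨rfl, h⟩⟩
        · exact he.symm
        · exact h
        · exact absurd ((hvy y).mp h) (fun hh => hne (hh.symm ▸ rfl))
      · rcases h with ⟨rfl, rfl⟩ | ⟨hy2, hx, h | ⟨rfl, h⟩⟩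
        · exact he
        · exact h.symm
        · exact absurd ((hvy x).mp h) (fun hh => hne (hh ▸ rfl))
  · refine congrArg csf ?_
    ext x y
    show (G.deleteEdges {s(u, v)}).Adj x y ↔ _
    simp only [dotContract, SimpleGraph.fromRel_adj, SimpleGraph.deleteEdges_adj,
      Set.mem_singleton_iff]
    constructor
    · rintro ⟨h, hs⟩
      have hx : x ≠ v := by
        rintro rfl
        exact hs (by rw [(hvy y).mp h, Sym2.eq_swap])
      have hy2 : y ≠ v := by
        rintro rfl
        exact hs (by rw [(hvy x).mp h.symm])
      exact ⟨h.ne, Or.inl ⟨hx, hy2, Or.inl h⟩⟩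
    · rintro ⟨hne, ⟨hx, hy2, h | ⟨rfl, h⟩⟩ | ⟨hy2, hx, h | ⟨rfl, h⟩⟩⟩
      · refine ⟨h, ?_⟩
        intro hs
        rcases Sym2.eq_iff.mp hs with ⟨rfl, rfl⟩ | ⟨rfl, rfl⟩
        · exact hy2 rfl
        · exact hx rfl
      · exact absurd ((hvy y).mp h) (fun hh => hne (hh.symm ▸ rfl))
      · refine ⟨h.symm, ?_⟩
        intro hs
        rcases Sym2.eq_iff.mp hs with ⟨rfl, rfl⟩ | ⟨rfl, rfl⟩
        · exact hy2 rfl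
        · exact hx rfl
      · exact absurd ((hvy x).mp h) (fun hh => hne (hh ▸ rfl))
end

section
/- For any forest F, the graph F \setminus I(F) obtained by deleting all internal edges of F is a spanning subgraph of F each of whose connected components is a star graph (possibly a single vertex). -/
open SimpleGraph

/-- Deleting all internal edges of a forest yields a spanning subgraph all of
whose connected components are stars. -/
theorem deleteInternal_star_forest {V : Type} [Fintype V] (F : SimpleGraph V)
    (hF : F.IsAcyclic) :
    F.deleteEdges (internalEdges F) ≤ F ∧
    ∀ C : (F.deleteEdges (internalEdges F)).ConnectedComponent,
      ∀ v ∈ C.supp, ∀ w ∈ C.supp,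
        2 ≤ deg (F.deleteEdges (internalEdges F)) v →
        2 ≤ deg (F.deleteEdges (internalEdges F)) w → v = w := by
  classical
  set G := F.deleteEdges (internalEdges F) with hGdef
  have hle : G ≤ F := SimpleGraph.deleteEdges_le _
  have hdegle : ∀ v, deg G v ≤ deg F v := fun v =>
    Set.ncard_le_ncard (fun x hx => hle hx) (Set.toFinite _)
  have key : ∀ n (v w : V) (p : G.Walk v w), p.length = n →
      2 ≤ deg G v → 2 ≤ deg G w → v = w := by
    intro n
    induction n using Nat.strong_induction_on with
    | _ n ih =>
      intro v w p hlen hv hw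
      cases p with
      | nil => rfl
      | @cons _ u _ h q =>
        have hvF : 2 ≤ deg F v := le_trans hv (hdegle v)
        have hedge : s(v, u) ∈ G.edgeSet := h
        have hedge' : s(v, u) ∈ F.edgeSet \ internalEdges F := by
          rwa [hGdef, SimpleGraph.edgeSet_deleteEdges] at hedge
        have huF : deg F u ≤ 1 := by
          by_contra hcon
          push_neg at hcon
          refine hedge'.2 ⟨hedge'.1, ?_⟩
          intro x hx
          rcases Sym2.mem_iff.mp hx with rfl | rfl
          · exact hvF
          · exact hcon
        have huG : deg G u ≤ 1 := le_trans (hdegle u) huF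
        cases q with
        | nil => omega
        | @cons _ x _ h2 q2 =>
          have hvN : v ∈ F.neighborSet u := (hle h).symm
          have hxN : x ∈ F.neighborSet u := hle h2
          have hxv : x = v :=
            (Set.ncard_le_one (Set.toFinite _)).mp huF x hxN v hvN
          subst hxv
          simp only [SimpleGraph.Walk.length_cons] at hlen
          exact ih q2.length (by omega) _ w q2 rfl hv hw
  refine ⟨hle, ?_⟩
  intro C v hv w hw hdv hdw
  have hvw : G.Reachable v w := by
    have := hv.trans hw.symm
    exact SimpleGraph.ConnectedComponent.exact this
  obtain ⟨p⟩ := hvw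
  exact key p.length v w p rfl hdv hdw
end

section
/- For every tree T, the internal subgraph \mathcal{I}_T is connected. -/
open SimpleGraph

/-- The internal degree of a vertex: the number of internal edges incident to it. -/
noncomputable def internalDeg {V : Type} [Fintype V] (G : SimpleGraph V) (v : V) : ℕ :=
  {w | G.Adj v w ∧ 2 ≤ deg G v ∧ 2 ≤ deg G w}.ncard

/-- The vertex set of the internal subgraph: vertices of internal degree `> 1`
together with the leaves adjacent to them. -/
noncomputable def internalSubgraphVerts {V : Type} [Fintype V] (G : SimpleGraph V) : Set V :=
  {v | 2 ≤ internalDeg G v} ∪ {v | deg G v = 1 ∧ ∃ w, G.Adj v w ∧ 2 ≤ internalDeg G w}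


section Aux

variable {V : Type} [Fintype V]

lemma aux_deg_two (G : SimpleGraph V) {x a b : V}
    (hab : a ≠ b) (ha : G.Adj x a) (hb : G.Adj x b) : 2 ≤ deg G x := by
  have hsub : ({a, b} : Set V) ⊆ G.neighborSet x := by
    intro y hy
    rcases hy with rfl | rfl
    · exact ha
    · exact hb
  have h2 : ({a, b} : Set V).ncard = 2 := Set.ncard_pair hab
  have := Set.ncard_le_ncard hsub (Set.toFinite _)
  unfold deg
  omega

lemma aux_internalDeg_two (G : SimpleGraph V) {x a b : V}
    (hab : a ≠ b) (ha : G.Adj x a) (hb : G.Adj x b)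
    (hda : 2 ≤ deg G a) (hdb : 2 ≤ deg G b) : 2 ≤ internalDeg G x := by
  have hdx : 2 ≤ deg G x := aux_deg_two G hab ha hb
  have hsub : ({a, b} : Set V) ⊆ {w | G.Adj x w ∧ 2 ≤ deg G x ∧ 2 ≤ deg G w} := by
    intro y hy
    rcases hy with rfl | rfl
    · exact ⟨ha, hdx, hda⟩
    · exact ⟨hb, hdx, hdb⟩
  have h2 : ({a, b} : Set V).ncard = 2 := Set.ncard_pair hab
  have := Set.ncard_le_ncard hsub (Set.toFinite _)
  unfold internalDeg
  omega

lemma aux_deg_of_internalDeg (G : SimpleGraph V) {x : V}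
    (h : 2 ≤ internalDeg G x) : 2 ≤ deg G x := by
  have hne : {w | G.Adj x w ∧ 2 ≤ deg G x ∧ 2 ≤ deg G w}.Nonempty := by
    rw [← Set.ncard_pos (Set.toFinite _)]
    unfold internalDeg at h
    omega
  obtain ⟨w, hw⟩ := hne
  exact hw.2.1

lemma aux_leaf_nbr (G : SimpleGraph V) {u x w : V}
    (h1 : deg G u = 1) (hx : G.Adj u x) (hw : G.Adj u w) : x = w := by
  unfold deg at h1
  obtain ⟨a, ha⟩ := Set.ncard_eq_one.mp h1
  have hx' : x ∈ G.neighborSet u := hx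
  have hw' : w ∈ G.neighborSet u := hw
  rw [ha] at hx' hw'
  simp only [Set.mem_singleton_iff] at hx' hw'
  rw [hx', hw']

lemma aux_interior_two_nbrs {G : SimpleGraph V} :
    ∀ {u v : V} (p : G.Walk u v), p.IsPath → ∀ x ∈ p.support, x ≠ u → x ≠ v →
      ∃ a b, a ≠ b ∧ G.Adj x a ∧ G.Adj x b ∧ a ∈ p.support ∧ b ∈ p.support := by
  intro u v p
  induction p with
  | nil =>
    intro _ x hx hxu _
    simp only [SimpleGraph.Walk.support_nil, List.mem_singleton] at hx
    exact absurd hx hxu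
  | @cons u u' v h q ih =>
    intro hp x hx hxu hxv
    rw [SimpleGraph.Walk.support_cons, List.mem_cons] at hx
    rcases hx with rfl | hx
    · exact absurd rfl hxu
    rcases eq_or_ne x u' with rfl | hxu'
    · cases q with
      | nil => exact absurd rfl hxv
      | @cons _ w _ h' q' =>
        refine ⟨u, w, ?_, h.symm, h', by simp, ?_⟩
        · rintro rfl
          have := (SimpleGraph.Walk.cons_isPath_iff h _).mp hp
          exact this.2 (by simp)
        · simp
    · obtain ⟨a, b, hab, ha, hb, has, hbs⟩ := ih hp.of_cons x hx hxu' hxv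
      exact ⟨a, b, hab, ha, hb, by simp [has], by simp [hbs]⟩

lemma aux_reachable_induce {G : SimpleGraph V} {S : Set V} :
    ∀ {u v : V} (p : G.Walk u v), (∀ x ∈ p.support, x ∈ S) →
      ∀ (hu : u ∈ S) (hv : v ∈ S), (G.induce S).Reachable ⟨u, hu⟩ ⟨v, hv⟩ := by
  intro u v p
  induction p with
  | nil => intro _ hu hv; rfl
  | @cons u u' v h q ih =>
    intro hs hu hv
    have hu' : u' ∈ S := hs u' (by simp)
    have hstep : (G.induce S).Adj ⟨u, hu⟩ ⟨u', hu'⟩ := h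
    refine hstep.reachable.trans (ih ?_ hu' hv)
    intro x hx
    exact hs x (by simp [hx])

end Aux

/-- The internal subgraph of a tree is connected (vacuously if it has at most
one vertex). -/
theorem internal_subgraph_connected {V : Type} [Fintype V] (T : SimpleGraph V)
    (hT : T.IsTree) :
    (T.induce (internalSubgraphVerts T)).Preconnected := by
  classical
  rintro ⟨u, hu⟩ ⟨v, hv⟩
  obtain ⟨w⟩ := hT.isConnected.preconnected u v
  obtain ⟨p, hpath⟩ : ∃ p : T.Walk u v, p.IsPath := ⟨w.toPath, w.toPath.2⟩
  have hdeg : ∀ y ∈ p.support, 2 ≤ deg T y ∨ (∀ z, T.Adj y z → 2 ≤ internalDeg T z) := by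
    intro y hy
    rcases eq_or_ne y u with rfl | hyu
    · rcases hu with h2 | ⟨h1, w', hw', hwi⟩
      · exact Or.inl (aux_deg_of_internalDeg T h2)
      · refine Or.inr (fun z hz => ?_)
        have := aux_leaf_nbr T h1 hz hw'
        rwa [this]
    rcases eq_or_ne y v with rfl | hyv
    · rcases hv with h2 | ⟨h1, w', hw', hwi⟩
      · exact Or.inl (aux_deg_of_internalDeg T h2)
      · refine Or.inr (fun z hz => ?_)
        have := aux_leaf_nbr T h1 hz hw'
        rwa [this]
    obtain ⟨a, b, hab, ha, hb, -, -⟩ := aux_interior_two_nbrs p hpath y hy hyu hyv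
    exact Or.inl (aux_deg_two T hab ha hb)
  have hsupp : ∀ x ∈ p.support, x ∈ internalSubgraphVerts T := by
    intro x hx
    rcases eq_or_ne x u with rfl | hxu
    · exact hu
    rcases eq_or_ne x v with rfl | hxv
    · exact hv
    obtain ⟨a, b, hab, ha, hb, has, hbs⟩ := aux_interior_two_nbrs p hpath x hx hxu hxv
    rcases hdeg a has with hda | hia
    · rcases hdeg b hbs with hdb | hib
      · exact Or.inl (aux_internalDeg_two T hab ha hb hda hdb)
      · exact Or.inl (hib x hb.symm)
    · exact Or.inl (hia x ha.symm)
  exact aux_reachable_induce p hsupp hu hv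
end

section
/- Let T be a tree of diameter 4. Then exactly one leaf component of T is contained in the internal subgraph \mathcal{I}_T, and every other leaf component of T has its center adjacent to the center of that component. Moreover the number of parts equal to 1 in \lambda_{LC}(T) is at most 1. -/
open SimpleGraph

section AuxLemmas

variable {V : Type}

/-- In a tree, every path between two vertices has length equal to the distance. -/
lemma tree_path_length_eq_dist {T : SimpleGraph V} (hT : T.IsTree) {u v : V}
    (p : T.Walk u v) (hp : p.IsPath) : p.length = T.dist u v := by
  obtain ⟨q, hq, hql⟩ := hT.isConnected.exists_path_of_dist u v
  have h := hT.IsAcyclic.path_unique ⟨p, hp⟩ ⟨q, hq⟩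
  rw [← hql]
  exact congrArg SimpleGraph.Walk.length (congrArg Subtype.val h)

/-- In a tree, paths with the same endpoints are equal. -/
lemma tree_path_unique {T : SimpleGraph V} (hT : T.IsTree) {u v : V}
    (p q : T.Walk u v) (hp : p.IsPath) (hq : q.IsPath) : p = q :=
  congrArg Subtype.val (hT.IsAcyclic.path_unique ⟨p, hp⟩ ⟨q, hq⟩)

/-- Characterisation of the support of a connected component via a closed set. -/
lemma supp_eq_of_closed {G : SimpleGraph V} {v : V} {S : Set V} (hv : v ∈ S)
    (hcl : ∀ s ∈ S, ∀ z, G.Adj s z → z ∈ S)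
    (hre : ∀ s ∈ S, G.Reachable v s) :
    (G.connectedComponentMk v).supp = S := by
  ext w
  simp only [ConnectedComponent.mem_supp_iff, ConnectedComponent.eq]
  constructor
  · intro h
    obtain ⟨q⟩ := h.symm
    have key : ∀ {x y : V} (q : G.Walk x y), x ∈ S → y ∈ S := by
      intro x y q
      induction q with
      | nil => exact id
      | cons h q ih => exact fun hx => ih (hcl _ hx _ h)
    exact key q hv
  · exact fun hw => (hre w hw).symm

end AuxLemmas

/-- For a tree of diameter 4: exactly one leaf component is contained in the
internal subgraph, every other leaf component has its center adjacent to the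
center of that component, and `λ_LC(T)` has at most one part equal to 1. -/
theorem diam_four_structure {V : Type} [Fintype V] (T : SimpleGraph V)
    (hT : T.IsTree)
    (hdiam : (∃ u v : V, T.dist u v = 4) ∧ ∀ u v : V, T.dist u v ≤ 4) :
    (∃ C : (T.deleteEdges (internalEdges T)).ConnectedComponent,
      C.supp ⊆ internalSubgraphVerts T ∧
      (∀ C' : (T.deleteEdges (internalEdges T)).ConnectedComponent,
        C'.supp ⊆ internalSubgraphVerts T → C' = C) ∧
      (∀ C' : (T.deleteEdges (internalEdges T)).ConnectedComponent, C' ≠ C →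
        ∀ v ∈ C'.supp, (∀ x ∈ C'.supp, deg T x ≤ deg T v) →
        ∀ w ∈ C.supp, (∀ x ∈ C.supp, deg T x ≤ deg T w) → T.Adj v w)) ∧
    (lambdaLC T).count 1 ≤ 1 := by
  classical
  obtain ⟨⟨u, v, huv⟩, hle⟩ := hdiam
  have hconn := hT.isConnected
  -- decompose a geodesic of length 4
  obtain ⟨p, hp, hpl⟩ := hconn.exists_path_of_dist u v
  rw [huv] at hpl
  rcases p with _ | @⟨_, a, _, h1, p⟩
  · simp at hpl
  rcases p with _ | @⟨_, c, _, h2, p⟩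
  · simp at hpl
  rcases p with _ | @⟨_, b, _, h3, p⟩
  · simp at hpl
  rcases p with _ | @⟨_, v', _, h4, p⟩
  · simp at hpl
  rcases p with _ | @⟨_, e, _, h5, p⟩
  swap
  · exfalso; simp at hpl
  clear hpl
  simp only [SimpleGraph.Walk.isPath_def, SimpleGraph.Walk.support_cons,
    SimpleGraph.Walk.support_nil, List.nodup_cons, List.mem_cons, List.mem_singleton,
    List.not_mem_nil, or_false, List.nodup_nil, and_true, not_or] at hp
  obtain ⟨⟨hua, huc, hub, huv'⟩, ⟨hac, hab, hav⟩, ⟨hcb, hcv⟩, hbv, -⟩ := hp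
  -- basic degree facts
  have hdeg2 : ∀ {x y z : V}, T.Adj x y → T.Adj x z → y ≠ z → 2 ≤ deg T x := by
    intro x y z hy hz hyz
    have : 1 < (T.neighborSet x).ncard := (Set.one_lt_ncard (Set.toFinite _)).mpr ⟨y, hy, z, hz, hyz⟩
    simp only [deg]; omega
  have hdegpos : ∀ {x y : V}, T.Adj x y → 1 ≤ deg T x := by
    intro x y hy
    have : (T.neighborSet x).Nonempty := ⟨y, hy⟩
    have := (Set.ncard_pos (Set.toFinite _)).mpr this
    simp only [deg]; omega
  have hdegone : ∀ {x y z : V}, deg T x = 1 → T.Adj x y → T.Adj x z → y = z := by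
    intro x y z hx hy hz
    obtain ⟨t, ht⟩ := Set.ncard_eq_one.mp hx
    have h1 : y ∈ T.neighborSet x := hy
    have h2 : z ∈ T.neighborSet x := hz
    rw [ht] at h1 h2
    rw [Set.mem_singleton_iff.mp h1, Set.mem_singleton_iff.mp h2]
  have hdegc : 2 ≤ deg T c := hdeg2 h2.symm h3 hab
  have hdega : 2 ≤ deg T a := hdeg2 h1.symm h2 huc
  have hdegb : 2 ≤ deg T b := hdeg2 h3.symm h4 hcv
  -- the key auxiliary bound: a path starting at c avoiding one of the two long
  -- branches has length at most 2
  have haux : ∀ {y y' w : V}, T.Adj c y → T.Adj y y' → y' ≠ c → ∀ (q : T.Walk c w),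
      q.IsPath → y ∉ q.support → q.length ≤ 2 := by
    intro y y' w hcy hyy' hy'c q hq hyq
    have hy'q : y' ∉ q.support := by
      intro hmem
      have hpath2 : (SimpleGraph.Walk.cons hcy
          (SimpleGraph.Walk.cons hyy' SimpleGraph.Walk.nil) : T.Walk c y').IsPath := by
        simp [SimpleGraph.Walk.isPath_def, hcy.ne, hyy'.ne, (Ne.symm hy'c)]
      have heq := tree_path_unique hT (q.takeUntil y' hmem) _ (hq.takeUntil hmem) hpath2
      have : y ∈ (q.takeUntil y' hmem).support := by rw [heq]; simp
      exact hyq (q.support_takeUntil_subset hmem this)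
    have hbig : (SimpleGraph.Walk.cons hyy'.symm (SimpleGraph.Walk.cons hcy.symm q)).IsPath := by
      rw [SimpleGraph.Walk.cons_isPath_iff]
      refine ⟨?_, ?_⟩
      · rw [SimpleGraph.Walk.cons_isPath_iff]; exact ⟨hq, hyq⟩
      · simp only [SimpleGraph.Walk.support_cons, List.mem_cons, not_or]
        exact ⟨Ne.symm hyy'.ne, hy'q⟩
    have hlen := tree_path_length_eq_dist hT _ hbig
    simp only [SimpleGraph.Walk.length_cons] at hlen
    have := hle y' w
    omega
  -- every vertex is within distance 2 of the centre c
  have hL1 : ∀ w, T.dist c w ≤ 2 := by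
    intro w
    obtain ⟨q, hq, hql⟩ := hconn.exists_path_of_dist c w
    rw [← hql]
    by_contra hgt
    push_neg at hgt
    have hkey : ∀ y, T.Adj c y → y ∈ q.support → y = q.getVert 1 := by
      intro y hcy hmem
      have ht := hq.takeUntil hmem
      have hl : (q.takeUntil y hmem).length = 1 := by
        rw [tree_path_length_eq_dist hT _ ht]
        exact SimpleGraph.dist_eq_one_iff_adj.mpr hcy
      have hgv : q.getVert 1 = y := by
        conv_lhs => rw [← q.take_spec hmem]
        rw [SimpleGraph.Walk.getVert_append, hl]
        simp
      exact hgv.symm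
    rcases eq_or_ne a (q.getVert 1) with h | h
    · have hbq : b ∉ q.support := fun hm => hab (h.trans (hkey b h3 hm).symm)
      exact absurd (haux h3 h4 (Ne.symm hcv) q hq hbq) (by omega)
    · have haq : a ∉ q.support := fun hm => h (hkey a h2.symm hm)
      exact absurd (haux h2.symm h1.symm huc q hq haq) (by omega)
  -- vertices at distance 2 from c are leaves with a unique neighbour
  have hL2 : ∀ w, T.dist c w = 2 → ∃ x, T.Adj c x ∧ T.Adj x w ∧ ∀ z, T.Adj w z → z = x := by
    intro w hw
    obtain ⟨q, hq, hql⟩ := hconn.exists_path_of_dist c w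
    rw [hw] at hql
    have hcx : T.Adj c (q.getVert 1) := by
      have := q.adj_getVert_succ (by omega : 0 < q.length)
      simpa using this
    have hxw : T.Adj (q.getVert 1) w := by
      have := q.adj_getVert_succ (by omega : 1 < q.length)
      have h2 : q.getVert 2 = w := by rw [← hql]; exact q.getVert_length
      rwa [h2] at this
    refine ⟨q.getVert 1, hcx, hxw, ?_⟩
    intro z hz
    by_contra hzx
    have hzc : z ≠ c := by
      intro h
      rw [h] at hz
      have : T.dist c w = 1 := SimpleGraph.dist_eq_one_iff_adj.mpr hz.symm
      omega
    have hcw : c ≠ w := by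
      rintro rfl
      rw [SimpleGraph.dist_self] at hw; omega
    have hxz' : q.getVert 1 ≠ z := fun hh => hzx hh.symm
    have hpath : (SimpleGraph.Walk.cons hcx (SimpleGraph.Walk.cons hxw
        (SimpleGraph.Walk.cons hz SimpleGraph.Walk.nil))).IsPath := by
      simp [SimpleGraph.Walk.isPath_def, hcx.ne, hcw, Ne.symm hzc, hxw.ne, hxz', hz.ne]
    have := tree_path_length_eq_dist hT _ hpath
    simp only [SimpleGraph.Walk.length_cons, SimpleGraph.Walk.length_nil] at this
    have := hL1 z
    omega
  -- distance classification
  have hcases : ∀ w : V, w = c ∨ T.Adj c w ∨ T.dist c w = 2 := by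
    intro w
    have h2 := hL1 w
    rcases Nat.lt_or_ge (T.dist c w) 1 with h | h
    · left
      have : T.dist c w = 0 := by omega
      exact ((hconn.dist_eq_zero_iff).mp this).symm
    rcases Nat.lt_or_ge (T.dist c w) 2 with h' | h'
    · right; left
      exact SimpleGraph.dist_eq_one_iff_adj.mp (by omega)
    · right; right; omega
  have hdeg_of_unique : ∀ {w x : V}, T.Adj x w → (∀ z, T.Adj w z → z = x) → deg T w = 1 := by
    intro w x hxw hu
    have : T.neighborSet w = {x} := by
      ext z
      simp only [SimpleGraph.mem_neighborSet, Set.mem_singleton_iff]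
      exact ⟨fun h => hu z h, fun h => h ▸ hxw.symm⟩
    simp [deg, this]
  -- neighbours (other than c) of a neighbour of c are leaves hanging from it
  have hL3 : ∀ {x z : V}, T.Adj c x → T.Adj x z → z ≠ c → ∀ t, T.Adj z t → t = x := by
    intro x z hcx hxz hzc
    have hnadj : ¬ T.Adj c z := by
      intro hcz
      have hp1 : (SimpleGraph.Walk.cons hcz SimpleGraph.Walk.nil : T.Walk c z).IsPath := by
        simp [SimpleGraph.Walk.isPath_def, hcz.ne]
      have hp2 : (SimpleGraph.Walk.cons hcx (SimpleGraph.Walk.cons hxz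
          SimpleGraph.Walk.nil) : T.Walk c z).IsPath := by
        simp [SimpleGraph.Walk.isPath_def, hcx.ne, Ne.symm hzc, hxz.ne]
      have := congrArg SimpleGraph.Walk.length (tree_path_unique hT _ _ hp1 hp2)
      simp at this
    have hdz : T.dist c z = 2 := by
      rcases hcases z with rfl | h | h
      · exact absurd rfl hzc
      · exact absurd h hnadj
      · exact h
    obtain ⟨x', hcx', hx'z, hux'⟩ := hL2 z hdz
    have hxx' : x = x' := hux' x hxz.symm
    exact fun t ht => (hux' t ht).trans hxx'.symm
  -- the graph with internal edges removed
  set G := T.deleteEdges (internalEdges T) with hGdef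
  have hmemIE : ∀ {x y : V}, T.Adj x y →
      (s(x, y) ∈ internalEdges T ↔ 2 ≤ deg T x ∧ 2 ≤ deg T y) := by
    intro x y hxy
    constructor
    · rintro ⟨-, h⟩
      exact ⟨h x (Sym2.mem_mk_left x y), h y (Sym2.mem_mk_right x y)⟩
    · rintro ⟨hx, hy⟩
      refine ⟨hxy, fun z hz => ?_⟩
      rcases Sym2.mem_iff.mp hz with rfl | rfl <;> assumption
  have hGadj : ∀ {x y : V}, G.Adj x y ↔ T.Adj x y ∧ (deg T x = 1 ∨ deg T y = 1) := by
    intro x y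
    rw [hGdef, SimpleGraph.deleteEdges_adj]
    constructor
    · rintro ⟨h, hni⟩
      refine ⟨h, ?_⟩
      rw [hmemIE h] at hni
      have h1 := hdegpos h
      have h2 := hdegpos h.symm
      omega
    · rintro ⟨h, hd⟩
      refine ⟨h, ?_⟩
      rw [hmemIE h]
      omega
  -- supp of the component of c
  have hSc : (G.connectedComponentMk c).supp
      = {w | w = c ∨ (T.Adj c w ∧ deg T w = 1)} := by
    apply supp_eq_of_closed
    · exact Or.inl rfl
    · rintro s (rfl | ⟨hcs, hds⟩) z hz
      · obtain ⟨hadj, hdeg⟩ := hGadj.mp hz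
        rcases hdeg with h | h
        · omega
        · exact Or.inr ⟨hadj, h⟩
      · obtain ⟨hadj, -⟩ := hGadj.mp hz
        exact Or.inl (hdegone hds hadj hcs.symm)
    · rintro s (rfl | ⟨hcs, hds⟩)
      · exact SimpleGraph.Reachable.refl _
      · exact (hGadj.mpr ⟨hcs, Or.inr hds⟩).reachable
  -- supp of the component of a non-leaf neighbour x of c
  have hSx : ∀ {x : V}, T.Adj c x → 2 ≤ deg T x →
      (G.connectedComponentMk x).supp = {w | w = x ∨ (T.Adj x w ∧ w ≠ c)} := by
    intro x hcx hdx
    apply supp_eq_of_closed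
    · exact Or.inl rfl
    · rintro s (rfl | ⟨hxs, hsc⟩) z hz
      · obtain ⟨hadj, hdeg⟩ := hGadj.mp hz
        have hdz : deg T z = 1 := by omega
        have hzc : z ≠ c := by
          rintro rfl; omega
        exact Or.inr ⟨hadj, hzc⟩
      · obtain ⟨hadj, -⟩ := hGadj.mp hz
        exact Or.inl (hL3 hcx hxs hsc z hadj)
    · rintro s (rfl | ⟨hxs, hsc⟩)
      · exact SimpleGraph.Reachable.refl _
      · have hds : deg T s = 1 := hdeg_of_unique hxs (hL3 hcx hxs hsc)
        exact (hGadj.mpr ⟨hxs, Or.inr hds⟩).reachable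
  -- classification of the components
  have hclass : ∀ C' : G.ConnectedComponent, C' = G.connectedComponentMk c ∨
      ∃ x, T.Adj c x ∧ 2 ≤ deg T x ∧ C' = G.connectedComponentMk x := by
    intro C'
    obtain ⟨w₀, rfl⟩ := C'.exists_rep
    rcases hcases w₀ with rfl | hadj | hd2
    · exact Or.inl rfl
    · rcases Nat.lt_or_ge (deg T w₀) 2 with h | h
      · left
        have h1 : deg T w₀ = 1 := by have := hdegpos hadj.symm; omega
        have : w₀ ∈ (G.connectedComponentMk c).supp := by
          rw [hSc]; exact Or.inr ⟨hadj, h1⟩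
        exact (SimpleGraph.ConnectedComponent.mem_supp_iff _ _).mp this
      · exact Or.inr ⟨w₀, hadj, h, rfl⟩
    · obtain ⟨x, hcx, hxw, hu⟩ := hL2 w₀ hd2
      have hw0c : w₀ ≠ c := by
        rintro rfl; rw [SimpleGraph.dist_self] at hd2; omega
      have hcw0 : c ≠ w₀ := Ne.symm hw0c
      have hdx : 2 ≤ deg T x := hdeg2 hcx.symm hxw hcw0
      refine Or.inr ⟨x, hcx, hdx, ?_⟩
      have : w₀ ∈ (G.connectedComponentMk x).supp := by
        rw [hSx hcx hdx]; exact Or.inr ⟨hxw, hw0c⟩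
      exact (SimpleGraph.ConnectedComponent.mem_supp_iff _ _).mp this
  -- internal degree facts
  have hIDc : 2 ≤ internalDeg T c := by
    have : 1 < ({w | T.Adj c w ∧ 2 ≤ deg T c ∧ 2 ≤ deg T w} : Set V).ncard := by
      refine (Set.one_lt_ncard (Set.toFinite _)).mpr
        ⟨a, ⟨h2.symm, hdegc, hdega⟩, b, ⟨h3, hdegc, hdegb⟩, hab⟩
    simp only [internalDeg]; omega
  have hIDx : ∀ {x : V}, T.Adj c x → 2 ≤ deg T x → ¬ (2 ≤ internalDeg T x) := by
    intro x hcx hdx h2x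
    have hsub : {w | T.Adj x w ∧ 2 ≤ deg T x ∧ 2 ≤ deg T w} ⊆ {c} := by
      rintro z ⟨hxz, -, hdz⟩
      by_contra hzc
      rw [Set.mem_singleton_iff] at hzc
      have := hdeg_of_unique hxz (fun t ht => hL3 hcx hxz hzc t ht)
      omega
    have := Set.ncard_le_ncard hsub (Set.finite_singleton c)
    simp only [internalDeg, Set.ncard_singleton] at h2x this
    omega
  have hxnotISV : ∀ {x : V}, T.Adj c x → 2 ≤ deg T x → x ∉ internalSubgraphVerts T := by
    intro x hcx hdx h
    rcases h with h | ⟨h1, -⟩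
    · exact hIDx hcx hdx h
    · omega
  have hScISV : ∀ s ∈ (G.connectedComponentMk c).supp, s ∈ internalSubgraphVerts T := by
    intro s hs
    rw [hSc] at hs
    rcases hs with rfl | ⟨hcs, hds⟩
    · exact Or.inl hIDc
    · exact Or.inr ⟨hds, c, hcs.symm, hIDc⟩
  refine ⟨⟨G.connectedComponentMk c, ?_, ?_, ?_⟩, ?_⟩
  · exact hScISV
  · intro C' hsub
    rcases hclass C' with h | ⟨x, hcx, hdx, rfl⟩
    · exact h
    · exfalso
      have hx : x ∈ (G.connectedComponentMk x).supp := by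
        rw [hSx hcx hdx]; exact Or.inl rfl
      exact hxnotISV hcx hdx (hsub hx)
  · intro C' hne v' hv' hmax w' hw' hmax'
    rcases hclass C' with h | ⟨x, hcx, hdx, rfl⟩
    · exact absurd h hne
    have hxmem : x ∈ (G.connectedComponentMk x).supp := by
      rw [hSx hcx hdx]; exact Or.inl rfl
    have hdv : 2 ≤ deg T v' := le_trans hdx (hmax x hxmem)
    have hv'x : v' = x := by
      rw [hSx hcx hdx] at hv'
      rcases hv' with h | ⟨hxw, hwc⟩
      · exact h
      · have := hdeg_of_unique hxw (fun t ht => hL3 hcx hxw hwc t ht)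
        omega
    have hcmem : c ∈ (G.connectedComponentMk c).supp := by
      rw [hSc]; exact Or.inl rfl
    have hdw : 2 ≤ deg T w' := le_trans hdegc (hmax' c hcmem)
    have hw'c : w' = c := by
      rw [hSc] at hw'
      rcases hw' with h | ⟨-, hd1⟩
      · exact h
      · omega
    rw [hv'x, hw'c]
    exact hcx.symm
  · -- at most one part equal to 1
    have hbound : ∀ x : G.ConnectedComponent, 1 = x.supp.ncard →
        x = G.connectedComponentMk c := by
      intro x h1
      rcases hclass x with h | ⟨y, hcy, hdy, rfl⟩
      · exact h
      · exfalso
        have hw : ∃ w, T.Adj y w ∧ w ≠ c := by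
          by_contra hcon
          push_neg at hcon
          have hsub : T.neighborSet y ⊆ {c} := fun w hw => hcon w hw
          have := Set.ncard_le_ncard hsub (Set.finite_singleton c)
          simp only [Set.ncard_singleton] at this
          simp only [deg] at hdy
          omega
        obtain ⟨w, hyw, hwc⟩ := hw
        have h2 : 1 < ((G.connectedComponentMk y).supp).ncard := by
          rw [hSx hcy hdy]
          exact (Set.one_lt_ncard (Set.toFinite _)).mpr
            ⟨y, Or.inl rfl, w, Or.inr ⟨hyw, hwc⟩, hyw.ne⟩
        omega
    unfold lambdaLC componentOrders
    rw [← hGdef, Multiset.count_map]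
    set M := (Finset.univ.image G.connectedComponentMk).val with hM
    have hnd : M.Nodup := (Finset.univ.image G.connectedComponentMk).nodup
    have hndf := hnd.filter (fun a : G.ConnectedComponent => 1 = a.supp.ncard)
    have hfle : M.filter (fun a => 1 = a.supp.ncard) ≤ {G.connectedComponentMk c} := by
      rw [Multiset.le_iff_count]
      intro C'
      by_cases hC : C' = G.connectedComponentMk c
      · subst hC
        have := Multiset.nodup_iff_count_le_one.mp hndf (G.connectedComponentMk c)
        simpa using this
      · have hnm : C' ∉ M.filter (fun a => 1 = a.supp.ncard) := by
          intro hmem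
          rw [Multiset.mem_filter] at hmem
          exact hC (hbound C' hmem.2)
        rw [Multiset.count_eq_zero.mpr hnm]
        exact Nat.zero_le _
    have := Multiset.card_le_card hfle
    simpa using this
end
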